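/- (Theorem 4.5: correctness of the GPK algorithm for the Generalised Bernstein–Vazirani problem.) Let R be an m×n matrix over 𝔽₂, let r₀ ∈ 𝔽₂ᵐ, and let f : 𝔽₂ⁿ → 𝔽₂ᵐ be the affine function f(x) = r₀ ⊕ (R·x), where (R·x)ᵢ = rᵢ·x and rᵢ ∈ 𝔽₂ⁿ is the i-th row of R. Then for every i ∈ Fin m and every z ∈ 𝔽₂ⁿ, Σ_{x ∈ 𝔽₂ⁿ} (−1)^( (f(x)·e_i) ⊕ (x·z) ) equals (−1)^((r₀)ᵢ)·2ⁿ if z = rᵢ and 0 otherwise. Hence the GPK algorithm with marker e_i outputs the i-th row of R with certainty, so the m runs GPK(e_0), …, GPK(e_{m−1}) exactly determine R. -/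

import Mathlib

/-- The sign `(−1)^a ∈ ℂ` associated to a bit `a ∈ 𝔽₂`. -/
noncomputable def sgn (a : ZMod 2) : ℂ := (-1 : ℂ) ^ a.val

/-- The pairing `x·z = Σᵢ xᵢ·zᵢ ∈ 𝔽₂` of two binary strings. -/
def dotp {k : ℕ} (x z : Fin k → ZMod 2) : ZMod 2 := ∑ i, x i * z i

/-- The `i`-th standard basis vector of `𝔽₂ᵏ`. -/
def stdBasis {k : ℕ} (i : Fin k) : Fin k → ZMod 2 :=
  fun j => if j = i then 1 else 0

lemma sgn_add (a b : ZMod 2) : sgn (a + b) = sgn a * sgn b := by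
  rw [sgn, sgn, sgn, ZMod.val_add, ← neg_one_pow_eq_pow_mod_two, pow_add]

lemma dotp_stdBasis {k : ℕ} (y : Fin k → ZMod 2) (i : Fin k) :
    dotp y (stdBasis i) = y i := by
  simp [dotp, stdBasis]

lemma dotp_add_right {k : ℕ} (x w v : Fin k → ZMod 2) :
    dotp x (w + v) = dotp x w + dotp x v := by
  simp [dotp, mul_add, Finset.sum_add_distrib]

lemma dotp_add_left {k : ℕ} (x w v : Fin k → ZMod 2) :
    dotp (x + w) v = dotp x v + dotp w v := by
  simp [dotp, add_mul, Finset.sum_add_distrib]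

lemma sum_sgn_dotp {k : ℕ} (w : Fin k → ZMod 2) :
    (∑ x : Fin k → ZMod 2, sgn (dotp x w)) = if w = 0 then (2 : ℂ) ^ k else 0 := by
  by_cases hw : w = 0
  · simp [hw, dotp, sgn, Fintype.card_fun]
  · simp only [hw, if_false]
    obtain ⟨j, hj⟩ : ∃ j, w j ≠ 0 := by
      by_contra h; push_neg at h; exact hw (funext h)
    have hj1 : w j = 1 := by
      have h01 : ∀ a : ZMod 2, a ≠ 0 → a = 1 := by decide
      exact h01 _ hj
    have key : (∑ x : Fin k → ZMod 2, sgn (dotp x w)) =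
        ∑ x : Fin k → ZMod 2, sgn (dotp (x + stdBasis j) w) :=
      (Fintype.sum_equiv (Equiv.addRight (stdBasis j)) _ _ (fun x => rfl)).symm
    have h2 : ∀ x : Fin k → ZMod 2, sgn (dotp (x + stdBasis j) w) = - sgn (dotp x w) := by
      intro x
      have hd : dotp (stdBasis j) w = 1 := by
        simp [dotp, stdBasis, hj1]
      rw [dotp_add_left, hd, sgn_add]
      simp [sgn, show ((1:ZMod 2)).val = 1 from rfl]
    simp only [h2, Finset.sum_neg_distrib] at key
    have h0 : (2 : ℂ) * ∑ x : Fin k → ZMod 2, sgn (dotp x w) = 0 := by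
      linear_combination key
    have := mul_eq_zero.mp h0
    simpa using this

/-- Theorem 4.5 (Generalised Bernstein–Vazirani): if `f(x) = r₀ ⊕ R·x` is
affine, then for every `i` and `z`, `Σ_x (−1)^((f(x)·e_i) ⊕ (x·z))` equals
`(−1)^((r₀)ᵢ)·2ⁿ` if `z` is the `i`-th row of `R` and `0` otherwise, so the
GPK algorithm with marker `e_i` outputs the `i`-th row of `R` with certainty
and the `m` runs exactly determine `R`. -/
theorem generalised_bernstein_vazirani {n m : ℕ}
    (R : Matrix (Fin m) (Fin n) (ZMod 2)) (r₀ : Fin m → ZMod 2)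
    (f : (Fin n → ZMod 2) → (Fin m → ZMod 2))
    (hf : ∀ x, f x = r₀ + R.mulVec x)
    (i : Fin m) (z : Fin n → ZMod 2) :
    (∑ x : Fin n → ZMod 2, sgn (dotp (f x) (stdBasis i) + dotp x z)) =
      (if z = R i then sgn (r₀ i) * 2 ^ n else 0) := by
  have step : ∀ x : Fin n → ZMod 2,
      sgn (dotp (f x) (stdBasis i) + dotp x z) =
        sgn (r₀ i) * sgn (dotp x (R i + z)) := by
    intro x
    have h1 : dotp (f x) (stdBasis i) = r₀ i + dotp x (R i) := by
      rw [hf, dotp_stdBasis]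
      simp [Matrix.mulVec, dotProduct, dotp, mul_comm]
    rw [h1, add_assoc, sgn_add, ← dotp_add_right]
  rw [Finset.sum_congr rfl (fun x _ => step x), ← Finset.mul_sum, sum_sgn_dotp]
  have hnegz : -z = z := by funext j; exact CharTwo.neg_eq (z j)
  rcases eq_or_ne z (R i) with hz | hz
  · subst hz
    rw [if_pos rfl, if_pos (by funext j; exact CharTwo.add_self_eq_zero _)]
  · rw [if_neg hz, if_neg, mul_zero]
    intro h
    have : R i = -z := add_eq_zero_iff_eq_neg.mp h
    rw [hnegz] at this
    exact hz this.symm
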